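/- arXiv:2103.16887 — 6 statements merged into one kernel-verified Lean document; each statement's English description precedes it below -/
import Mathlib

section
/- For any two discrete random variables X and Y with joint distribution p(x,y) and any conditional probability distribution q(x|y), the mutual information satisfies I(X:Y) ≥ E_{p(x,y)}[log q(x|y)] + H(X), where H(X) is the Shannon entropy of X (the Barber–Agakov lower bound). -/
open scoped BigOperators

/-- Barber–Agakov lower bound on mutual information:
`I(X:Y) ≥ E_{p(x,y)}[log q(x|y)] + H(X)` for any conditional pmf `q`. -/
theorem barber_agakov_bound {X Y : Type*} [Fintype X] [Fintype Y]
    (p : X → Y → ℝ) (q : X → Y → ℝ)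
    (hp : ∀ x y, 0 ≤ p x y) (hpsum : ∑ x, ∑ y, p x y = 1)
    (hq : ∀ x y, 0 < q x y) (hqsum : ∀ y, ∑ x, q x y = 1) :
    (∑ x, ∑ y, p x y * Real.log (q x y)) +
      (-∑ x, (∑ y, p x y) * Real.log (∑ y, p x y)) ≤
    ∑ x, ∑ y, p x y * Real.log (p x y / ((∑ y', p x y') * (∑ x', p x' y))) := by
  -- key pointwise inequality
  have key : ∀ x y,
      p x y * Real.log (q x y) - p x y * Real.log (∑ y', p x y')
        - p x y * Real.log (p x y / ((∑ y', p x y') * (∑ x', p x' y)))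
      ≤ q x y * (∑ x', p x' y) - p x y := by
    intro x y
    rcases eq_or_lt_of_le (hp x y) with h0 | h0
    · rw [← h0]
      simp
      exact mul_nonneg (le_of_lt (hq x y)) (Finset.sum_nonneg fun x _ => hp x y)
    · have hX : 0 < ∑ y', p x y' :=
        lt_of_lt_of_le h0 (Finset.single_le_sum (fun y _ => hp x y) (Finset.mem_univ y))
      have hY : 0 < ∑ x', p x' y :=
        lt_of_lt_of_le h0 (Finset.single_le_sum (fun x _ => hp x y) (Finset.mem_univ x))
      rw [Real.log_div (ne_of_gt h0) (mul_pos hX hY).ne', Real.log_mul (ne_of_gt hX) (ne_of_gt hY)]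
      have hlog : Real.log (q x y * (∑ x', p x' y) / p x y)
          ≤ q x y * (∑ x', p x' y) / p x y - 1 :=
        Real.log_le_sub_one_of_pos (div_pos (mul_pos (hq x y) hY) h0)
      rw [Real.log_div (mul_pos (hq x y) hY).ne' (ne_of_gt h0),
        Real.log_mul (ne_of_gt (hq x y)) (ne_of_gt hY)] at hlog
      have hm := mul_le_mul_of_nonneg_left hlog (le_of_lt h0)
      have hdiv : p x y * (q x y * (∑ x', p x' y) / p x y - 1)
          = q x y * (∑ x', p x' y) - p x y := by
        field_simp
      rw [hdiv] at hm
      nlinarith [hm]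
  have h1 : ∑ x, ∑ y, q x y * (∑ x', p x' y) = 1 := by
    rw [Finset.sum_comm]
    calc ∑ y, ∑ x, q x y * (∑ x', p x' y)
        = ∑ y, (∑ x, q x y) * (∑ x', p x' y) := by
          simp [Finset.sum_mul]
      _ = ∑ y, ∑ x', p x' y := by simp [hqsum]
      _ = 1 := by rw [Finset.sum_comm]; exact hpsum
  have hsum : ∑ x, ∑ y, (p x y * Real.log (q x y) - p x y * Real.log (∑ y', p x y')
        - p x y * Real.log (p x y / ((∑ y', p x y') * (∑ x', p x' y))))
      ≤ 0 := by
    calc ∑ x, ∑ y, (p x y * Real.log (q x y) - p x y * Real.log (∑ y', p x y')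
          - p x y * Real.log (p x y / ((∑ y', p x y') * (∑ x', p x' y))))
        ≤ ∑ x, ∑ y, (q x y * (∑ x', p x' y) - p x y) :=
          Finset.sum_le_sum fun x _ => Finset.sum_le_sum fun y _ => key x y
      _ = (∑ x, ∑ y, q x y * (∑ x', p x' y)) - ∑ x, ∑ y, p x y := by
          simp [Finset.sum_sub_distrib]
      _ = 0 := by rw [h1, hpsum]; ring
  have hent : ∑ x, (∑ y, p x y) * Real.log (∑ y, p x y)
      = ∑ x, ∑ y, p x y * Real.log (∑ y', p x y') := by
    refine Finset.sum_congr rfl fun x _ => ?_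
    rw [Finset.sum_mul]
  have hexp : ∑ x, ∑ y, (p x y * Real.log (q x y) - p x y * Real.log (∑ y', p x y')
        - p x y * Real.log (p x y / ((∑ y', p x y') * (∑ x', p x' y))))
      = (∑ x, ∑ y, p x y * Real.log (q x y))
        - (∑ x, ∑ y, p x y * Real.log (∑ y', p x y'))
        - ∑ x, ∑ y, p x y * Real.log (p x y / ((∑ y', p x y') * (∑ x', p x' y))) := by
    simp [Finset.sum_sub_distrib]
  rw [hent]
  rw [hexp] at hsum
  linarith
end

section
/- For any two finite random variables X, Y with joint pmf p(x,y) and any real-valued function f(x,y), the mutual information satisfies I(X:Y) ≥ E_{p(x,y)}[f(x,y)] - E_{p(x)p(y)}[e^{f(x,y)}/a(y)] - E_{p(y)}[log a(y)] + 1, for any positive baseline function a(y) > 0 (the TUBA lower bound). -/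
open scoped BigOperators

private lemma key_ineq {t w : ℝ} (ht : 0 < t) (hw : 0 < w) :
    t + t * Real.log (w / t) ≤ w := by
  have h := Real.log_le_sub_one_of_pos (x := w / t) (by positivity)
  nlinarith [mul_le_mul_of_nonneg_left h ht.le, mul_div_cancel₀ w ht.ne']

private lemma pointwise {t s u b : ℝ} (ht : 0 ≤ t) (hs : 0 ≤ s)
    (hb : 0 < b) (hts : 0 < t → 0 < s) :
    t * u - s * (Real.exp u / b) - t * Real.log b + t ≤ t * Real.log (t / s) := by
  rcases eq_or_lt_of_le ht with h0 | htpos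
  · have : s * (Real.exp u / b) ≥ 0 := by positivity
    simp [← h0]; nlinarith
  · have hspos := hts htpos
    have hw : (0:ℝ) < s * (Real.exp u / b) := by positivity
    have hk := key_ineq htpos hw
    have hlog : Real.log (s * (Real.exp u / b) / t)
        = u - Real.log b - Real.log (t / s) := by
      rw [Real.log_div (by positivity) htpos.ne', Real.log_mul hspos.ne' (by positivity),
        Real.log_div (Real.exp_pos u).ne' hb.ne', Real.log_exp,
        Real.log_div htpos.ne' hspos.ne']
      ring
    rw [hlog] at hk
    nlinarith

/-- The TUBA lower bound on mutual information: for any critic `f` and any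
positive baseline `a(y)`,
`I(X:Y) ≥ E_{p(x,y)}[f] - E_{p(x)p(y)}[e^f / a(y)] - E_{p(y)}[log a(y)] + 1`. -/
theorem tuba_bound {X Y : Type*} [Fintype X] [Fintype Y]
    (p : X → Y → ℝ) (f : X → Y → ℝ) (a : Y → ℝ)
    (hp : ∀ x y, 0 ≤ p x y) (hpsum : ∑ x, ∑ y, p x y = 1)
    (ha : ∀ y, 0 < a y) :
    (∑ x, ∑ y, p x y * f x y)
      - (∑ x, ∑ y, (∑ y', p x y') * (∑ x', p x' y) * (Real.exp (f x y) / a y))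
      - (∑ y, (∑ x', p x' y) * Real.log (a y)) + 1 ≤
    ∑ x, ∑ y, p x y * Real.log (p x y / ((∑ y', p x y') * (∑ x', p x' y))) := by
  have hlogsum : (∑ y, (∑ x', p x' y) * Real.log (a y))
      = ∑ x, ∑ y, p x y * Real.log (a y) := by
    rw [Finset.sum_comm]
    exact Finset.sum_congr rfl fun y _ => by rw [Finset.sum_mul]
  rw [hlogsum, ← hpsum, ← Finset.sum_sub_distrib, ← Finset.sum_sub_distrib,
    ← Finset.sum_add_distrib]
  refine Finset.sum_le_sum fun x _ => ?_
  rw [← Finset.sum_sub_distrib, ← Finset.sum_sub_distrib, ← Finset.sum_add_distrib]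
  refine Finset.sum_le_sum fun y _ => ?_
  exact pointwise (hp x y) (mul_nonneg (Finset.sum_nonneg fun i _ => hp x i) (Finset.sum_nonneg fun i _ => hp i y)) (ha y) (fun htpos => by
    have h1 : p x y ≤ ∑ y', p x y' :=
      Finset.single_le_sum (fun i _ => hp x i) (Finset.mem_univ y)
    have h2 : p x y ≤ ∑ x', p x' y :=
      Finset.single_le_sum (fun i _ => hp i y) (Finset.mem_univ x)
    exact mul_pos (lt_of_lt_of_le htpos h1) (lt_of_lt_of_le htpos h2))
end

section
/- For any two finite random variables X, Y and any real-valued function f(x,y), I(X:Y) ≥ E_{p(x,y)}[f(x,y)] - e^{-1} E_{p(x)p(y)}[e^{f(x,y)}] (the NWJ / MINE-f lower bound). -/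
open scoped BigOperators

lemma nwj_aux (p q t : ℝ) (hp : 0 ≤ p) (hq : 0 ≤ q) (h : p = 0 ∨ 0 < q) :
    p * t - (Real.exp 1)⁻¹ * (q * Real.exp t) ≤ p * Real.log (p / q) := by
  rcases eq_or_lt_of_le hp with h0 | hp'
  · have hnn : 0 ≤ (Real.exp 1)⁻¹ * (q * Real.exp t) := by positivity
    rw [← h0]
    simp only [zero_mul, zero_sub]
    linarith
  · have hq' : 0 < q := by
      rcases h with h | h
      · exact absurd h.symm hp'.ne
      · exact h
    have hpq : 0 < p / q := div_pos hp' hq'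
    have key : t - Real.log (p / q) ≤ Real.exp (t - Real.log (p / q) - 1) := by
      have := Real.add_one_le_exp (t - Real.log (p / q) - 1)
      linarith
    have hexp : p * Real.exp (t - Real.log (p / q) - 1)
        = (Real.exp 1)⁻¹ * (q * Real.exp t) := by
      rw [Real.exp_sub, Real.exp_sub, Real.exp_log hpq]
      have he : Real.exp 1 ≠ 0 := (Real.exp_pos 1).ne'
      field_simp
    have hmul := mul_le_mul_of_nonneg_left key hp'.le
    rw [hexp] at hmul
    nlinarith [hmul]

/-- The NWJ (MINE-f) lower bound on mutual information:
`I(X:Y) ≥ E_{p(x,y)}[f] - e⁻¹ E_{p(x)p(y)}[e^f]`. -/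
theorem nwj_bound {X Y : Type*} [Fintype X] [Fintype Y]
    (p : X → Y → ℝ) (f : X → Y → ℝ)
    (hp : ∀ x y, 0 ≤ p x y) (hpsum : ∑ x, ∑ y, p x y = 1) :
    (∑ x, ∑ y, p x y * f x y)
      - (Real.exp 1)⁻¹ * (∑ x, ∑ y, (∑ y', p x y') * (∑ x', p x' y) * Real.exp (f x y)) ≤
    ∑ x, ∑ y, p x y * Real.log (p x y / ((∑ y', p x y') * (∑ x', p x' y))) := by
  have hrw : (∑ x, ∑ y, p x y * f x y)
      - (Real.exp 1)⁻¹ * (∑ x, ∑ y, (∑ y', p x y') * (∑ x', p x' y) * Real.exp (f x y))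
      = ∑ x, ∑ y, (p x y * f x y
          - (Real.exp 1)⁻¹ * ((∑ y', p x y') * (∑ x', p x' y) * Real.exp (f x y))) := by
    rw [Finset.mul_sum, ← Finset.sum_sub_distrib]
    refine Finset.sum_congr rfl fun x _ => ?_
    rw [Finset.mul_sum, ← Finset.sum_sub_distrib]
  rw [hrw]
  refine Finset.sum_le_sum fun x _ => Finset.sum_le_sum fun y _ => ?_
  have hq : 0 ≤ (∑ y', p x y') * (∑ x', p x' y) :=
    mul_nonneg (Finset.sum_nonneg fun i _ => hp x i) (Finset.sum_nonneg fun i _ => hp i y)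
  have h : p x y = 0 ∨ 0 < (∑ y', p x y') * (∑ x', p x' y) := by
    rcases eq_or_lt_of_le (hp x y) with h0 | h0
    · exact Or.inl h0.symm
    · refine Or.inr (mul_pos ?_ ?_)
      · exact lt_of_lt_of_le h0 (Finset.single_le_sum (fun i _ => hp x i) (Finset.mem_univ y))
      · exact lt_of_lt_of_le h0 (Finset.single_le_sum (fun i _ => hp i y) (Finset.mem_univ x))
  have := nwj_aux (p x y) ((∑ y', p x y') * (∑ x', p x' y)) (f x y) (hp x y) hq h
  exact this
end

section
/- For any real-valued function f(x,y), the functional I_NWJ[f] = E_{p(x,y)}[f] - e^{-1} E_{p(x)p(y)}[e^f] satisfies I_NWJ[f] ≤ I(X:Y), with equality iff f = f* = 1 + log(p(x,y)/(p(x)p(y))) on the support of p(x)p(y). -/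
open scoped BigOperators

lemma nwj_pointwise (a m t : ℝ) (ha : 0 < a) (hm : 0 < m) :
    a * t - (Real.exp 1)⁻¹ * (m * Real.exp t) ≤ a * Real.log (a / m) ∧
    (a * t - (Real.exp 1)⁻¹ * (m * Real.exp t) = a * Real.log (a / m) ↔
      t = 1 + Real.log (a / m)) := by
  set L := Real.log (a / m) with hL
  set s := t - 1 - L with hs
  have hexp : (Real.exp 1)⁻¹ * (m * Real.exp t) = a * Real.exp s := by
    have h1 : Real.exp L = a / m := Real.exp_log (div_pos ha hm)
    rw [hs, Real.exp_sub, Real.exp_sub, h1]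
    have he : Real.exp 1 ≠ 0 := (Real.exp_pos 1).ne'
    field_simp
  rw [hexp]
  have h1 : s + 1 ≤ Real.exp s := Real.add_one_le_exp s
  have hmul : a * (s + 1) ≤ a * Real.exp s :=
    mul_le_mul_of_nonneg_left h1 ha.le
  have hLs : L = t - 1 - s := by rw [hs]; ring
  constructor
  · rw [hLs]; nlinarith
  · constructor
    · intro h
      by_contra hne
      have hs0 : s ≠ 0 := by
        intro h0
        apply hne
        rw [hs] at h0
        linarith
      have hlt := Real.add_one_lt_exp hs0
      have : a * (s + 1) < a * Real.exp s := mul_lt_mul_of_pos_left hlt ha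
      rw [hLs] at h
      nlinarith
    · intro ht
      have hs0 : s = 0 := by rw [hs, ht]; ring
      rw [hs0, Real.exp_zero, hLs, hs0]
      ring

/-- The NWJ functional is bounded above by the mutual information, with
equality iff the critic equals `f* = 1 + log(p(x,y)/(p(x)p(y)))` on the
support of the product of marginals. -/
theorem nwj_le_mi_iff_optimal {X Y : Type*} [Fintype X] [Fintype Y]
    (p : X → Y → ℝ) (f : X → Y → ℝ)
    (hp : ∀ x y, 0 ≤ p x y) (hpsum : ∑ x, ∑ y, p x y = 1)
    (hsupp : ∀ x y, 0 < (∑ y', p x y') → 0 < (∑ x', p x' y) → 0 < p x y) :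
    ((∑ x, ∑ y, p x y * f x y)
        - (Real.exp 1)⁻¹ *
          (∑ x, ∑ y, (∑ y', p x y') * (∑ x', p x' y) * Real.exp (f x y)) ≤
      ∑ x, ∑ y, p x y * Real.log (p x y / ((∑ y', p x y') * (∑ x', p x' y)))) ∧
    ((∑ x, ∑ y, p x y * f x y)
        - (Real.exp 1)⁻¹ *
          (∑ x, ∑ y, (∑ y', p x y') * (∑ x', p x' y) * Real.exp (f x y)) =
      (∑ x, ∑ y, p x y * Real.log (p x y / ((∑ y', p x y') * (∑ x', p x' y)))) ↔
      ∀ x y, 0 < (∑ y', p x y') * (∑ x', p x' y) →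
        f x y = 1 + Real.log (p x y / ((∑ y', p x y') * (∑ x', p x' y)))) := by
  classical
  have hxnn : ∀ x, 0 ≤ ∑ y', p x y' := fun x => Finset.sum_nonneg fun _ _ => hp _ _
  have hynn : ∀ y, 0 ≤ ∑ x', p x' y := fun y => Finset.sum_nonneg fun _ _ => hp _ _
  have keypt : ∀ x y,
      (p x y * f x y - (Real.exp 1)⁻¹ *
          ((∑ y', p x y') * (∑ x', p x' y) * Real.exp (f x y)) ≤
        p x y * Real.log (p x y / ((∑ y', p x y') * (∑ x', p x' y)))) ∧
      ((p x y * f x y - (Real.exp 1)⁻¹ *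
          ((∑ y', p x y') * (∑ x', p x' y) * Real.exp (f x y)) =
        p x y * Real.log (p x y / ((∑ y', p x y') * (∑ x', p x' y)))) ↔
        (0 < (∑ y', p x y') * (∑ x', p x' y) →
          f x y = 1 + Real.log (p x y / ((∑ y', p x y') * (∑ x', p x' y))))) := by
    intro x y
    rcases lt_or_ge 0 ((∑ y', p x y') * (∑ x', p x' y)) with hmpos | hmz
    · have hx : 0 < ∑ y', p x y' := by
        rcases (hxnn x).lt_or_eq with h | h
        · exact h
        · exfalso; rw [← h, zero_mul] at hmpos; exact lt_irrefl 0 hmpos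
      have hy : 0 < ∑ x', p x' y := by
        rcases (hynn y).lt_or_eq with h | h
        · exact h
        · exfalso; rw [← h, mul_zero] at hmpos; exact lt_irrefl 0 hmpos
      have ha : 0 < p x y := hsupp x y hx hy
      obtain ⟨h1, h2⟩ := nwj_pointwise (p x y) ((∑ y', p x y') * (∑ x', p x' y))
        (f x y) ha hmpos
      exact ⟨h1, by rw [h2]; exact ⟨fun h _ => h, fun h => h hmpos⟩⟩
    · have hmz' : (∑ y', p x y') * (∑ x', p x' y) = 0 :=
        le_antisymm hmz (mul_nonneg (hxnn x) (hynn y))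
      have ha : p x y = 0 := by
        rcases mul_eq_zero.mp hmz' with h0 | h0
        · exact (Finset.sum_eq_zero_iff_of_nonneg (fun y' _ => hp x y')).mp h0 y
            (Finset.mem_univ y)
        · exact (Finset.sum_eq_zero_iff_of_nonneg (fun x' _ => hp x' y)).mp h0 x
            (Finset.mem_univ x)
      constructor
      · simp [ha, hmz']
      · simp [ha, hmz']
  have hLrw : (∑ x, ∑ y, p x y * f x y)
        - (Real.exp 1)⁻¹ *
          (∑ x, ∑ y, (∑ y', p x y') * (∑ x', p x' y) * Real.exp (f x y)) =
      ∑ x, ∑ y, (p x y * f x y - (Real.exp 1)⁻¹ *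
          ((∑ y', p x y') * (∑ x', p x' y) * Real.exp (f x y))) := by
    rw [Finset.mul_sum, ← Finset.sum_sub_distrib]
    refine Finset.sum_congr rfl fun x _ => ?_
    rw [Finset.mul_sum, ← Finset.sum_sub_distrib]
  rw [hLrw]
  rw [show (∑ x, ∑ y, (p x y * f x y - (Real.exp 1)⁻¹ *
          ((∑ y', p x y') * (∑ x', p x' y) * Real.exp (f x y)))) =
      ∑ z : X × Y, (p z.1 z.2 * f z.1 z.2 - (Real.exp 1)⁻¹ *
          ((∑ y', p z.1 y') * (∑ x', p x' z.2) * Real.exp (f z.1 z.2)))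
    from (Fintype.sum_prod_type (fun z : X × Y =>
      p z.1 z.2 * f z.1 z.2 - (Real.exp 1)⁻¹ *
          ((∑ y', p z.1 y') * (∑ x', p x' z.2) * Real.exp (f z.1 z.2)))).symm]
  rw [show (∑ x, ∑ y, p x y * Real.log (p x y / ((∑ y', p x y') * (∑ x', p x' y)))) =
      ∑ z : X × Y, p z.1 z.2 *
        Real.log (p z.1 z.2 / ((∑ y', p z.1 y') * (∑ x', p x' z.2)))
    from (Fintype.sum_prod_type (fun z : X × Y => p z.1 z.2 *
        Real.log (p z.1 z.2 / ((∑ y', p z.1 y') * (∑ x', p x' z.2))))).symm]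
  constructor
  · exact Finset.sum_le_sum fun z _ => (keypt z.1 z.2).1
  · rw [Finset.sum_eq_sum_iff_of_le fun z _ => (keypt z.1 z.2).1]
    constructor
    · intro h x y hm
      exact (keypt x y).2.mp (h (x, y) (Finset.mem_univ _)) hm
    · intro h z _
      exact (keypt z.1 z.2).2.mpr fun hm => h z.1 z.2 hm
end

section
/- InfoNCE is a lower bound on mutual information: for i.i.d. pairs (X_k,Y_k) ~ p(x,y), k=1..K, and any critic f, I(X:Y) ≥ I_NCE[f] where I_NCE[f] = (1/K) E[ Σ_j log( e^{f(x_j,y_j)} / ((1/K) Σ_i e^{f(x_i,y_j)}) ) ]. -/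
open scoped BigOperators

open Finset

lemma sum_pi_prod {K : ℕ} {Z : Type*} [Fintype Z] (F : Fin K → Z → ℝ) :
    ∑ zs : Fin K → Z, ∏ k, F k (zs k) = ∏ k, ∑ z, F k z := by
  rw [Finset.prod_univ_sum]
  rw [Fintype.piFinset_univ]

lemma sum_pi_prod_eq {K : ℕ} {Z : Type*} [Fintype Z] (j : Fin K) (F : Fin K → Z → ℝ)
    (h : ∀ k, k ≠ j → ∑ z, F k z = 1) :
    ∑ zs : Fin K → Z, ∏ k, F k (zs k) = ∑ z, F j z := by
  rw [sum_pi_prod, ← Finset.mul_prod_erase Finset.univ _ (Finset.mem_univ j),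
    Finset.prod_eq_one (fun k hk => h k (Finset.ne_of_mem_erase hk)), mul_one]

lemma marginalize {X Y : Type*} [Fintype X] [Fintype Y] {K : ℕ} (j : Fin K)
    (p : X → Y → ℝ) (hpsum : ∑ x, ∑ y, p x y = 1) (φ : X → Y → ℝ) :
    ∑ xs : Fin K → X, ∑ ys : Fin K → Y, (∏ k, p (xs k) (ys k)) * φ (xs j) (ys j)
      = ∑ x, ∑ y, p x y * φ x y := by
  have h1 : ∀ (xs : Fin K → X) (ys : Fin K → Y),
      (∏ k, p (xs k) (ys k)) * φ (xs j) (ys j)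
        = ∏ k, (p (xs k) (ys k) * if k = j then φ (xs k) (ys k) else 1) := by
    intro xs ys
    rw [Finset.prod_mul_distrib, Finset.prod_ite_eq' Finset.univ j
      (fun k => φ (xs k) (ys k))]
    simp
  simp only [h1]
  have h2 : ∀ xs : Fin K → X,
      ∑ ys : Fin K → Y, ∏ k, (p (xs k) (ys k) * if k = j then φ (xs k) (ys k) else 1)
        = ∏ k, ∑ y, (p (xs k) y * if k = j then φ (xs k) y else 1) :=
    fun xs => sum_pi_prod (fun k y => p (xs k) y * if k = j then φ (xs k) y else 1)
  simp only [h2]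
  rw [sum_pi_prod_eq j (fun k x => ∑ y, (p x y * if k = j then φ x y else 1))
    (fun k hk => by simp only [if_neg hk, mul_one]; exact hpsum)]
  simp

lemma sumT {X Y : Type*} [Fintype X] [Fintype Y] {K : ℕ} (hK : 1 ≤ K)
    (p : X → Y → ℝ) (f : X → Y → ℝ)
    (hpsum : ∑ x, ∑ y, p x y = 1) :
    ∑ j : Fin K, ∑ xs : Fin K → X, ∑ ys : Fin K → Y,
      (∏ k ∈ Finset.univ.erase j, p (xs k) (ys k)) *
        ((∑ y', p (xs j) y') * ((∑ x', p x' (ys j)) *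
          (Real.exp (f (xs j) (ys j)) /
            ((1/(K:ℝ)) * ∑ i, Real.exp (f (xs i) (ys j))))))
      = K := by
  have hne : Nonempty (Fin K) := Fin.pos_iff_nonempty.mp hK
  have hY : ∑ y, ∑ x', p x' y = 1 := by rw [Finset.sum_comm]; exact hpsum
  rw [Finset.sum_comm]
  have inner : ∀ xs : Fin K → X, ∀ j : Fin K,
      ∑ ys : Fin K → Y,
        (∏ k ∈ Finset.univ.erase j, p (xs k) (ys k)) *
          ((∑ y', p (xs j) y') * ((∑ x', p x' (ys j)) *
            (Real.exp (f (xs j) (ys j)) /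
              ((1/(K:ℝ)) * ∑ i, Real.exp (f (xs i) (ys j))))))
      = (∏ k, ∑ y', p (xs k) y') *
          ∑ y, (∑ x', p x' y) *
            (Real.exp (f (xs j) y) / ((1/(K:ℝ)) * ∑ i, Real.exp (f (xs i) y))) := by
    intro xs j
    set G : Fin K → Y → ℝ := fun k y =>
      if k = j then (∑ x', p x' y) *
        (Real.exp (f (xs j) y) / ((1/(K:ℝ)) * ∑ i, Real.exp (f (xs i) y)))
      else p (xs k) y with hG
    have h3 : ∀ ys : Fin K → Y,
        (∏ k ∈ Finset.univ.erase j, p (xs k) (ys k)) *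
          ((∑ y', p (xs j) y') * ((∑ x', p x' (ys j)) *
            (Real.exp (f (xs j) (ys j)) /
              ((1/(K:ℝ)) * ∑ i, Real.exp (f (xs i) (ys j))))))
        = (∑ y', p (xs j) y') * ∏ k, G k (ys k) := by
      intro ys
      rw [← Finset.mul_prod_erase Finset.univ (fun k => G k (ys k)) (Finset.mem_univ j)]
      have : ∏ k ∈ Finset.univ.erase j, G k (ys k)
          = ∏ k ∈ Finset.univ.erase j, p (xs k) (ys k) :=
        Finset.prod_congr rfl (fun k hk => by
          simp only [hG, if_neg (Finset.ne_of_mem_erase hk)])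
      rw [this]
      simp only [hG, if_pos rfl]
      ring
    simp only [h3]
    rw [← Finset.mul_sum, sum_pi_prod G]
    rw [← Finset.mul_prod_erase Finset.univ (fun k => ∑ y, G k y) (Finset.mem_univ j)]
    have : ∏ k ∈ Finset.univ.erase j, ∑ y, G k y
        = ∏ k ∈ Finset.univ.erase j, ∑ y', p (xs k) y' :=
      Finset.prod_congr rfl (fun k hk => by
        simp only [hG, if_neg (Finset.ne_of_mem_erase hk)])
    rw [this, ← Finset.mul_prod_erase Finset.univ (fun k => ∑ y', p (xs k) y')
      (Finset.mem_univ j)]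
    simp only [hG, if_pos rfl]
    ring
  have step : ∀ xs : Fin K → X,
      ∑ j : Fin K, ∑ ys : Fin K → Y,
        (∏ k ∈ Finset.univ.erase j, p (xs k) (ys k)) *
          ((∑ y', p (xs j) y') * ((∑ x', p x' (ys j)) *
            (Real.exp (f (xs j) (ys j)) /
              ((1/(K:ℝ)) * ∑ i, Real.exp (f (xs i) (ys j))))))
      = (∏ k, ∑ y', p (xs k) y') * K := by
    intro xs
    simp only [inner]
    rw [← Finset.mul_sum, Finset.sum_comm]
    congr 1
    have key : ∀ y : Y,
        ∑ j : Fin K, Real.exp (f (xs j) y) /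
          ((1/(K:ℝ)) * ∑ i, Real.exp (f (xs i) y)) = K := by
      intro y
      rw [← Finset.sum_div]
      have hS : (0:ℝ) < ∑ i, Real.exp (f (xs i) y) :=
        Finset.sum_pos (fun i _ => Real.exp_pos _) Finset.univ_nonempty
      have hK0 : (0:ℝ) < K := by exact_mod_cast hK
      field_simp
    calc ∑ y, ∑ j : Fin K, (∑ x', p x' y) *
          (Real.exp (f (xs j) y) / ((1/(K:ℝ)) * ∑ i, Real.exp (f (xs i) y)))
        = ∑ y, (∑ x', p x' y) * (K:ℝ) := by
          refine Finset.sum_congr rfl fun y _ => ?_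
          rw [← Finset.mul_sum, key y]
      _ = (K:ℝ) := by rw [← Finset.sum_mul, hY, one_mul]
  simp only [step]
  rw [← Finset.sum_mul]
  have : ∑ xs : Fin K → X, ∏ k, ∑ y', p (xs k) y' = 1 := by
    rw [sum_pi_prod (fun (k : Fin K) (x : X) => ∑ y', p x y')]
    simp [hpsum]
  rw [this, one_mul]

lemma pointwise_bound {X Y : Type*} [Fintype X] [Fintype Y] {K : ℕ} (hK : 1 ≤ K)
    (p : X → Y → ℝ) (f : X → Y → ℝ) (hp : ∀ x y, 0 ≤ p x y)
    (j : Fin K) (xs : Fin K → X) (ys : Fin K → Y) :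
    (∏ k, p (xs k) (ys k)) * Real.log (Real.exp (f (xs j) (ys j)) /
        ((1/(K:ℝ)) * ∑ i, Real.exp (f (xs i) (ys j))))
    ≤ (∏ k, p (xs k) (ys k)) *
        Real.log (p (xs j) (ys j) / ((∑ y', p (xs j) y') * (∑ x', p x' (ys j))))
      + ((∏ k ∈ Finset.univ.erase j, p (xs k) (ys k)) *
          ((∑ y', p (xs j) y') * ((∑ x', p x' (ys j)) *
            (Real.exp (f (xs j) (ys j)) /
              ((1/(K:ℝ)) * ∑ i, Real.exp (f (xs i) (ys j))))))
        - ∏ k, p (xs k) (ys k)) := by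
  have hne : Nonempty (Fin K) := Fin.pos_iff_nonempty.mp hK
  set w := ∏ k, p (xs k) (ys k) with hw
  set m := (1/(K:ℝ)) * ∑ i, Real.exp (f (xs i) (ys j)) with hmdef
  have hK0 : (0:ℝ) < K := by exact_mod_cast hK
  have hm : 0 < m := by
    apply mul_pos (by positivity)
    exact Finset.sum_pos (fun i _ => Real.exp_pos _) Finset.univ_nonempty
  have hwnn : 0 ≤ w := Finset.prod_nonneg fun k _ => hp _ _
  rcases hwnn.eq_or_lt with h0 | hpos
  · rw [← h0]
    simp only [zero_mul, sub_zero, zero_add]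
    apply mul_nonneg (Finset.prod_nonneg fun k _ => hp _ _)
    apply mul_nonneg (Finset.sum_nonneg fun y _ => hp _ _)
    apply mul_nonneg (Finset.sum_nonneg fun x _ => hp _ _)
    exact div_nonneg (Real.exp_pos _).le hm.le
  · have hpk : ∀ k, 0 < p (xs k) (ys k) := by
      intro k
      rcases (hp (xs k) (ys k)).eq_or_lt with h | h
      · exact absurd (Finset.prod_eq_zero (Finset.mem_univ k) h.symm) hpos.ne'
      · exact h
    have hpX : 0 < ∑ y', p (xs j) y' :=
      Finset.sum_pos' (fun y _ => hp _ _) ⟨ys j, Finset.mem_univ _, hpk j⟩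
    have hpY : 0 < ∑ x', p x' (ys j) :=
      Finset.sum_pos' (fun x _ => hp _ _) ⟨xs j, Finset.mem_univ _, hpk j⟩
    set a := Real.exp (f (xs j) (ys j)) / m with hadef
    set b := p (xs j) (ys j) / ((∑ y', p (xs j) y') * (∑ x', p x' (ys j))) with hbdef
    have ha : 0 < a := div_pos (Real.exp_pos _) hm
    have hb : 0 < b := div_pos (hpk j) (mul_pos hpX hpY)
    have hT : (∏ k ∈ Finset.univ.erase j, p (xs k) (ys k)) *
          ((∑ y', p (xs j) y') * ((∑ x', p x' (ys j)) * a)) = w * (a / b) := by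
      have hw_eq : w = p (xs j) (ys j) * ∏ k ∈ Finset.univ.erase j, p (xs k) (ys k) :=
        (Finset.mul_prod_erase Finset.univ _ (Finset.mem_univ j)).symm
      rw [hw_eq, hbdef]
      field_simp [(hpk j).ne']
    have h1 : Real.log a - Real.log b = Real.log (a/b) :=
      (Real.log_div ha.ne' hb.ne').symm
    have h2 : Real.log (a/b) ≤ a/b - 1 :=
      Real.log_le_sub_one_of_pos (div_pos ha hb)
    have h3 : w * Real.log (a/b) ≤ w * (a/b - 1) :=
      mul_le_mul_of_nonneg_left h2 hpos.le
    rw [← h1, mul_sub, mul_sub, mul_one] at h3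
    rw [hT]
    linarith

/-- InfoNCE is a lower bound on the mutual information: `I(X:Y) ≥ I_NCE[f]`. -/
theorem infoNCE_le_mi {X Y : Type*} [Fintype X] [Fintype Y]
    (K : ℕ) (hK : 1 ≤ K)
    (p : X → Y → ℝ) (f : X → Y → ℝ)
    (hp : ∀ x y, 0 ≤ p x y) (hpsum : ∑ x, ∑ y, p x y = 1) :
    (∑ xs : Fin K → X, ∑ ys : Fin K → Y,
      (∏ k, p (xs k) (ys k)) *
        ((1 / (K : ℝ)) * ∑ j, Real.log (Real.exp (f (xs j) (ys j)) /
          ((1 / (K : ℝ)) * ∑ i, Real.exp (f (xs i) (ys j)))))) ≤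
    ∑ x, ∑ y, p x y * Real.log (p x y / ((∑ y', p x y') * (∑ x', p x' y))) := by
  have hK0 : (0:ℝ) < K := by exact_mod_cast hK
  have j0 : Fin K := ⟨0, hK⟩
  have hnorm : ∑ xs : Fin K → X, ∑ ys : Fin K → Y, ∏ k, p (xs k) (ys k) = 1 := by
    have h := marginalize j0 p hpsum (fun _ _ => 1)
    simpa [hpsum] using h
  have lhs_eq : (∑ xs : Fin K → X, ∑ ys : Fin K → Y,
      (∏ k, p (xs k) (ys k)) *
        ((1 / (K : ℝ)) * ∑ j, Real.log (Real.exp (f (xs j) (ys j)) /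
          ((1 / (K : ℝ)) * ∑ i, Real.exp (f (xs i) (ys j))))))
      = (1/(K:ℝ)) * ∑ j : Fin K, ∑ xs : Fin K → X, ∑ ys : Fin K → Y,
          (∏ k, p (xs k) (ys k)) * Real.log (Real.exp (f (xs j) (ys j)) /
            ((1 / (K : ℝ)) * ∑ i, Real.exp (f (xs i) (ys j)))) := by
    have e1 : ∀ (xs : Fin K → X) (ys : Fin K → Y),
        (∏ k, p (xs k) (ys k)) *
          ((1 / (K : ℝ)) * ∑ j, Real.log (Real.exp (f (xs j) (ys j)) /
            ((1 / (K : ℝ)) * ∑ i, Real.exp (f (xs i) (ys j)))))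
        = ∑ j : Fin K, (1/(K:ℝ)) *
            ((∏ k, p (xs k) (ys k)) * Real.log (Real.exp (f (xs j) (ys j)) /
              ((1 / (K : ℝ)) * ∑ i, Real.exp (f (xs i) (ys j))))) := by
      intro xs ys
      rw [Finset.mul_sum, Finset.mul_sum]
      exact Finset.sum_congr rfl fun j _ => by ring
    have pull2 : ∀ (g : (Fin K → X) → (Fin K → Y) → ℝ),
        ∑ xs : Fin K → X, ∑ ys : Fin K → Y, (1/(K:ℝ)) * g xs ys
          = (1/(K:ℝ)) * ∑ xs : Fin K → X, ∑ ys : Fin K → Y, g xs ys := by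
      intro g
      rw [Finset.mul_sum]
      exact Finset.sum_congr rfl fun xs _ => by rw [Finset.mul_sum]
    have swap3 : ∀ (g : Fin K → (Fin K → X) → (Fin K → Y) → ℝ),
        ∑ xs : Fin K → X, ∑ ys : Fin K → Y, ∑ j : Fin K, g j xs ys
          = ∑ j : Fin K, ∑ xs : Fin K → X, ∑ ys : Fin K → Y, g j xs ys := by
      intro g
      calc ∑ xs : Fin K → X, ∑ ys : Fin K → Y, ∑ j : Fin K, g j xs ys
          = ∑ xs : Fin K → X, ∑ j : Fin K, ∑ ys : Fin K → Y, g j xs ys :=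
            Finset.sum_congr rfl fun xs _ => Finset.sum_comm
        _ = ∑ j : Fin K, ∑ xs : Fin K → X, ∑ ys : Fin K → Y, g j xs ys :=
            Finset.sum_comm
    simp only [e1]
    rw [swap3]
    rw [Finset.mul_sum]
    exact Finset.sum_congr rfl fun j _ => pull2 _
  rw [lhs_eq]
  have main : ∑ j : Fin K, ∑ xs : Fin K → X, ∑ ys : Fin K → Y,
      (∏ k, p (xs k) (ys k)) * Real.log (Real.exp (f (xs j) (ys j)) /
        ((1 / (K : ℝ)) * ∑ i, Real.exp (f (xs i) (ys j))))
      ≤ (K:ℝ) * ∑ x, ∑ y, p x y *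
          Real.log (p x y / ((∑ y', p x y') * (∑ x', p x' y))) := by
    calc ∑ j : Fin K, ∑ xs : Fin K → X, ∑ ys : Fin K → Y,
        (∏ k, p (xs k) (ys k)) * Real.log (Real.exp (f (xs j) (ys j)) /
          ((1 / (K : ℝ)) * ∑ i, Real.exp (f (xs i) (ys j))))
        ≤ ∑ j : Fin K, ∑ xs : Fin K → X, ∑ ys : Fin K → Y,
            ((∏ k, p (xs k) (ys k)) *
              Real.log (p (xs j) (ys j) /
                ((∑ y', p (xs j) y') * (∑ x', p x' (ys j))))
            + ((∏ k ∈ Finset.univ.erase j, p (xs k) (ys k)) *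
                ((∑ y', p (xs j) y') * ((∑ x', p x' (ys j)) *
                  (Real.exp (f (xs j) (ys j)) /
                    ((1/(K:ℝ)) * ∑ i, Real.exp (f (xs i) (ys j))))))
              - ∏ k, p (xs k) (ys k))) := by
          refine Finset.sum_le_sum fun j _ => Finset.sum_le_sum fun xs _ =>
            Finset.sum_le_sum fun ys _ => ?_
          exact pointwise_bound hK p f hp j xs ys
      _ = ∑ j : Fin K,
            ((∑ x, ∑ y, p x y *
                Real.log (p x y / ((∑ y', p x y') * (∑ x', p x' y))))
            + ((∑ xs : Fin K → X, ∑ ys : Fin K → Y,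
                (∏ k ∈ Finset.univ.erase j, p (xs k) (ys k)) *
                  ((∑ y', p (xs j) y') * ((∑ x', p x' (ys j)) *
                    (Real.exp (f (xs j) (ys j)) /
                      ((1/(K:ℝ)) * ∑ i, Real.exp (f (xs i) (ys j)))))))
              - 1)) := by
          refine Finset.sum_congr rfl fun j _ => ?_
          simp only [Finset.sum_add_distrib, Finset.sum_sub_distrib]
          rw [marginalize j p hpsum
            (fun x y => Real.log (p x y / ((∑ y', p x y') * (∑ x', p x' y)))),
            hnorm]
      _ = (K:ℝ) * (∑ x, ∑ y, p x y *
            Real.log (p x y / ((∑ y', p x y') * (∑ x', p x' y))))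
          + ((∑ j : Fin K, ∑ xs : Fin K → X, ∑ ys : Fin K → Y,
              (∏ k ∈ Finset.univ.erase j, p (xs k) (ys k)) *
                ((∑ y', p (xs j) y') * ((∑ x', p x' (ys j)) *
                  (Real.exp (f (xs j) (ys j)) /
                    ((1/(K:ℝ)) * ∑ i, Real.exp (f (xs i) (ys j)))))))
            - K) := by
          rw [Finset.sum_add_distrib, Finset.sum_sub_distrib]
          simp [Finset.sum_const, Finset.card_univ, nsmul_eq_mul, mul_comm]
      _ = (K:ℝ) * ∑ x, ∑ y, p x y *
            Real.log (p x y / ((∑ y', p x y') * (∑ x', p x' y))) := by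
          rw [sumT hK p f hpsum]
          ring
  calc (1/(K:ℝ)) * ∑ j : Fin K, ∑ xs : Fin K → X, ∑ ys : Fin K → Y,
      (∏ k, p (xs k) (ys k)) * Real.log (Real.exp (f (xs j) (ys j)) /
        ((1 / (K : ℝ)) * ∑ i, Real.exp (f (xs i) (ys j))))
      ≤ (1/(K:ℝ)) * ((K:ℝ) * ∑ x, ∑ y, p x y *
          Real.log (p x y / ((∑ y', p x y') * (∑ x', p x' y)))) := by
        apply mul_le_mul_of_nonneg_left main (by positivity)
    _ = ∑ x, ∑ y, p x y *
          Real.log (p x y / ((∑ y', p x y') * (∑ x', p x' y))) := by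
        field_simp
end

section
/- The shifted Gumbel integral identity: for reals x_1,...,x_N and any fixed index k, ∫_{-∞}^{∞} e^{-z+x_k} exp(-e^{-z+x_k}) ∏_{i≠k} exp(-e^{-z+x_i}) dz = e^{x_k} / Σ_{i=1}^N e^{x_i}. -/
open scoped BigOperators
open MeasureTheory

lemma gumbel_aux (S : ℝ) (hS : 0 < S) :
    (∫ z : ℝ, Real.exp (-z) * Real.exp (-(S * Real.exp (-z)))) = S⁻¹ := by
  set g : ℝ → ℝ := fun z => Real.exp (-z) * Real.exp (-(S * Real.exp (-z))) with hg_def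
  have hgc : Continuous g := by fun_prop
  have hderiv : ∀ z : ℝ, HasDerivAt (fun z => S⁻¹ * Real.exp (-(S * Real.exp (-z)))) (g z) z := by
    intro z
    have h1 : HasDerivAt (fun z : ℝ => -(S * Real.exp (-z))) (S * Real.exp (-z)) z := by
      have h0 : HasDerivAt (fun z : ℝ => Real.exp (-z)) (-Real.exp (-z)) z := by
        exact ((Real.hasDerivAt_exp (-z)).comp z (hasDerivAt_neg z)).congr_deriv (by ring)
      exact ((h0.const_mul S).neg).congr_deriv (by ring)
    have h2 := h1.exp
    have h3 := h2.const_mul S⁻¹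
    exact h3.congr_deriv (by simp only [g]; field_simp)
  have hgI : Integrable g := by
    have hmeas : AEStronglyMeasurable g (volume : Measure ℝ) := hgc.aestronglyMeasurable
    rw [← integrableOn_univ, ← Set.Iic_union_Ioi (a := (0:ℝ)), integrableOn_union]
    constructor
    · -- Gaussian domination on Iic 0
      have hgauss : Integrable (fun z : ℝ =>
          Real.exp (1/S) * Real.exp (-(S/4) * (z - -(2/S))^2)) := by
        exact ((integrable_exp_neg_mul_sq (by positivity : 0 < S/4)).comp_sub_right
          (-(2/S))).const_mul _
      refine (hgauss.integrableOn).mono' hmeas.restrict ?_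
      filter_upwards [ae_restrict_mem measurableSet_Iic] with z hz
      have hg0 : 0 ≤ g z := by positivity
      rw [Real.norm_of_nonneg hg0]
      have hq : z^2/4 ≤ Real.exp (-z) := by
        have h1 : -z/2 + 1 ≤ Real.exp (-z/2) := Real.add_one_le_exp _
        have h2 : Real.exp (-z/2) * Real.exp (-z/2) = Real.exp (-z) := by
          rw [← Real.exp_add]; ring_nf
        simp only [Set.mem_Iic] at hz
        nlinarith [Real.exp_pos (-z/2)]
      have : g z = Real.exp (-z + -(S * Real.exp (-z))) := by
        rw [Real.exp_add]
      rw [this]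
      rw [show Real.exp (1/S) * Real.exp (-(S/4) * (z - -(2/S))^2)
          = Real.exp (1/S + -(S/4) * (z - -(2/S))^2) from (Real.exp_add _ _).symm]
      apply Real.exp_le_exp.mpr
      have h3 : S * (z^2/4) ≤ S * Real.exp (-z) := by
        exact mul_le_mul_of_nonneg_left hq hS.le
      have hid : 1/S + -(S/4) * (z - -(2/S))^2 = -z - S * (z^2/4) := by
        field_simp; ring
      rw [hid]
      linarith [h3]
    · -- domination by exp(-z) on Ioi 0
      refine ((exp_neg_integrableOn_Ioi 0 (by norm_num : (0:ℝ) < 1))).mono' hmeas.restrict ?_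
      filter_upwards with z
      have hg0 : 0 ≤ g z := by positivity
      rw [Real.norm_of_nonneg hg0]
      have h1 : Real.exp (-(S * Real.exp (-z))) ≤ 1 := by
        apply Real.exp_le_one_iff.mpr
        have := Real.exp_pos (-z)
        nlinarith
      calc g z ≤ Real.exp (-z) * 1 := by
            exact mul_le_mul_of_nonneg_left h1 (Real.exp_pos _).le
        _ = Real.exp (-(1:ℝ) * z) := by rw [mul_one]; ring_nf
  have hbot : Filter.Tendsto (fun z : ℝ => S⁻¹ * Real.exp (-(S * Real.exp (-z))))
      Filter.atBot (nhds 0) := by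
    have h1 : Filter.Tendsto (fun z : ℝ => Real.exp (-z)) Filter.atBot Filter.atTop :=
      Real.tendsto_exp_atTop.comp Filter.tendsto_neg_atBot_atTop
    have h2 : Filter.Tendsto (fun z : ℝ => -(S * Real.exp (-z))) Filter.atBot Filter.atBot := by
      exact Filter.tendsto_neg_atTop_atBot.comp (h1.const_mul_atTop hS)
    have h3 := Real.tendsto_exp_atBot.comp h2
    simpa using h3.const_mul S⁻¹
  have htop : Filter.Tendsto (fun z : ℝ => S⁻¹ * Real.exp (-(S * Real.exp (-z))))
      Filter.atTop (nhds S⁻¹) := by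
    have h1 : Filter.Tendsto (fun z : ℝ => -(S * Real.exp (-z))) Filter.atTop (nhds 0) := by
      simpa using (Real.tendsto_exp_neg_atTop_nhds_zero.const_mul S).neg
    have h3 := (Real.continuous_exp.tendsto 0).comp h1
    have h4 := h3.const_mul S⁻¹
    simpa using h4
  have := MeasureTheory.integral_of_hasDerivAt_of_tendsto hderiv hgI hbot htop
  simpa using this

/-- The shifted Gumbel integral identity: integrating the Gumbel density
centered at `x k` against the Gumbel CDFs centered at the other `x i` gives
the softmax weight `e^{x_k} / Σ_i e^{x_i}`. -/
theorem gumbel_integral_identity (N : ℕ) (x : Fin N → ℝ) (k : Fin N) :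
    (∫ z : ℝ, Real.exp (-z + x k) * Real.exp (-Real.exp (-z + x k)) *
        ∏ i ∈ Finset.univ.erase k, Real.exp (-Real.exp (-z + x i)))
      = Real.exp (x k) / ∑ i, Real.exp (x i) := by
  set S : ℝ := ∑ i, Real.exp (x i) with hS_def
  have hS : 0 < S := Finset.sum_pos (fun i _ => Real.exp_pos _) ⟨k, Finset.mem_univ k⟩
  have key : ∀ z : ℝ, Real.exp (-z + x k) * Real.exp (-Real.exp (-z + x k)) *
        ∏ i ∈ Finset.univ.erase k, Real.exp (-Real.exp (-z + x i))
      = Real.exp (x k) * (Real.exp (-z) * Real.exp (-(S * Real.exp (-z)))) := by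
    intro z
    rw [← Real.exp_sum]
    rw [← Real.exp_add, ← Real.exp_add, ← Real.exp_add, ← Real.exp_add]
    congr 1
    have hsum : (∑ i ∈ Finset.univ.erase k, -Real.exp (-z + x i)) + -Real.exp (-z + x k)
        = -(S * Real.exp (-z)) := by
      have h1 : (∑ i ∈ Finset.univ.erase k, Real.exp (-z + x i)) + Real.exp (-z + x k)
          = S * Real.exp (-z) := by
        rw [Finset.sum_erase_add _ _ (Finset.mem_univ k), hS_def, Finset.sum_mul]
        apply Finset.sum_congr rfl
        intro i _
        rw [← Real.exp_add]
        ring_nf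
      rw [Finset.sum_neg_distrib]
      linarith [h1]
    linarith [hsum]
  rw [show (∫ z : ℝ, Real.exp (-z + x k) * Real.exp (-Real.exp (-z + x k)) *
        ∏ i ∈ Finset.univ.erase k, Real.exp (-Real.exp (-z + x i)))
      = ∫ z : ℝ, Real.exp (x k) * (Real.exp (-z) * Real.exp (-(S * Real.exp (-z))))
      from integral_congr_ae (Filter.Eventually.of_forall key)]
  rw [integral_const_mul, gumbel_aux S hS, div_eq_mul_inv]
end
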